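/- (Proposition 3.) Let ω > 0, T* > 0, c > 0 and L* ∈ ℝ, and let (x₀*, ẋ₀*) be the fixed point of the step map with step length L* and step time T*. Let (x₀, ẋ₀) ∈ ℝ² be a state for which the safe range is nonempty (max(L_l⁰, L_l^T) < min(L_u⁰, L_u^T)) and for which A₂₁(x₀ − x₀*) + A₂₂(ẋ₀ − ẋ₀*) ≠ 0. Then the open intervals (L_l^s, L_u^s) = (max(L_l⁰, L_l^T), min(L_u⁰, L_u^T)) and (min{ΔL₁, ΔL₂} + L*, max{ΔL₁, ΔL₂} + L*), with ΔL₁, ΔL₂ computed at (x₀ − x₀*, ẋ₀ − ẋ₀*), have nonempty intersection. -/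

import Mathlib

private lemma ioo_inter (a b c d : ℝ) (hab : a < b) (hcd : c < d) (had : a < d)
    (hcb : c < b) : (Set.Ioo a b ∩ Set.Ioo c d).Nonempty := by
  have h1 : max a c < min b d := max_lt (lt_min hab had) (lt_min hcb hcd)
  refine ⟨(max a c + min b d) / 2, ⟨?_, ?_⟩, ⟨?_, ?_⟩⟩
  · have := le_max_left a c; linarith
  · have := min_le_left b d; linarith
  · have := le_max_right a c; linarith
  · have := min_le_right b d; linarith

set_option maxHeartbeats 2000000 in
/-- Proposition 3: if the safe step-length range at `(x₀,v₀)` is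
nonempty and the state differs from the fixed point in the `A₂₁x + A₂₂v` direction,
then the safe range and the convergence range intersect. -/
theorem stmt16 (ω T c L' x₀ v₀ : ℝ) (hω : 0 < ω) (hT : 0 < T) (hc : 0 < c)
    (A11 A12 A21 A22 : ℝ)
    (hA11 : A11 = Real.cosh (ω * T)) (hA12 : A12 = Real.sinh (ω * T) / ω)
    (hA21 : A21 = ω * Real.sinh (ω * T)) (hA22 : A22 = Real.cosh (ω * T))
    (xs vs : ℝ)
    (hxs : xs = -L' / 2)
    (hvs : vs = (ω * L' / 2) * ((Real.exp (ω * T) + 1) / (Real.exp (ω * T) - 1)))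
    (Δx Δv : ℝ) (hΔx : Δx = x₀ - xs) (hΔv : Δv = v₀ - vs)
    (ΔL₁ ΔL₂ : ℝ)
    (hΔL₁ : ΔL₁ = ((A11 * A21 + A21 * A22 + A21) * Δx
      + (A12 * A21 + A22 ^ 2 + A22) * Δv) / A21)
    (hΔL₂ : ΔL₂ = ((A11 * A21 + A21 * A22 - A21) * Δx
      + (A12 * A21 + A22 ^ 2 - A22) * Δv) / A21)
    (Lls Lus : ℝ)
    (hLls : Lls = max (A11 * x₀ + A12 * v₀ - c)
      ((2 * A11 - 1 / A11) * x₀ + 2 * A12 * v₀ - c / A11))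
    (hLus : Lus = min (A11 * x₀ + A12 * v₀ + c)
      ((2 * A11 - 1 / A11) * x₀ + 2 * A12 * v₀ + c / A11))
    (hsafe : Lls < Lus)
    (hnz : A21 * Δx + A22 * Δv ≠ 0) :
    (Set.Ioo Lls Lus ∩ Set.Ioo (min ΔL₁ ΔL₂ + L') (max ΔL₁ ΔL₂ + L')).Nonempty := by
  have hωT : 0 < ω * T := mul_pos hω hT
  set s := Real.sinh (ω * T) with hsdef
  set h := Real.cosh (ω * T) with hhdef
  have hs : 0 < s := by rw [hsdef]; exact Real.sinh_pos_iff.mpr hωT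
  have hh0 : 0 < h := by rw [hhdef]; exact Real.cosh_pos _
  have hsq : h ^ 2 = s ^ 2 + 1 := by rw [hhdef, hsdef]; exact Real.cosh_sq _
  clear_value s h
  have hh1 : 1 < h := by nlinarith [hsq, hs, hh0, sq_nonneg (h - 1), mul_pos hs hs]
  have hωne : ω ≠ 0 := ne_of_gt hω
  have hsne : s ≠ 0 := ne_of_gt hs
  have hhne : h ≠ 0 := ne_of_gt hh0
  have hhm : (0:ℝ) < h - 1 := by linarith
  have hhp : (0:ℝ) < h + 1 := by linarith
  have hhmne : h - 1 ≠ 0 := ne_of_gt hhm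
  have hhpne : h + 1 ≠ 0 := ne_of_gt hhp
  have hE1 : 1 < Real.exp (ω * T) := Real.one_lt_exp_iff.mpr hωT
  have hEne : Real.exp (ω * T) ≠ 0 := (Real.exp_pos _).ne'
  have hvs' : vs = ω * L' / 2 * ((h + 1) / s) := by
    rw [hvs]
    congr 1
    rw [div_eq_div_iff (by linarith) hsne, hhdef, hsdef, Real.cosh_eq, Real.sinh_eq,
      Real.exp_neg]
    field_simp
    ring
  set M := L' / 2 with hM
  have hL' : L' = 2 * M := by rw [hM]; ring
  set P := A11 * Δx + A12 * Δv with hP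
  set Q := A21 * Δx + A22 * Δv with hQ
  set R := s * Q / ω with hR
  clear_value M P Q R
  have hRne : R ≠ 0 := by
    rw [hR]; exact div_ne_zero (mul_ne_zero hsne hnz) hωne
  have e1 : A11 * x₀ + A12 * v₀ = P + M := by
    rw [hP, hM, hA11, hA12, hΔx, hΔv, hxs, hvs']
    field_simp
    ring
  have e2 : (2 * A11 - 1 / A11) * x₀ + 2 * A12 * v₀ = P + (R + 2 * h * M + M) / h := by
    rw [hP, hR, hQ, hM, hA11, hA12, hA21, hA22, hΔx, hΔv, hxs, hvs']
    field_simp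
    linear_combination (ω * (2 * x₀ + L')) * hsq
  have e3 : ΔL₁ = P + R / (h - 1) := by
    rw [hΔL₁, hP, hR, hQ, hA11, hA12, hA21, hA22]
    field_simp
    linear_combination (ω * s * Δx + h * Δv) * hsq
  have e4 : ΔL₂ = P + R / (h + 1) := by
    rw [hΔL₂, hP, hR, hQ, hA11, hA12, hA21, hA22]
    field_simp
    linear_combination (ω * s * Δx + h * Δv) * hsq
  -- the two consequences of safety
  have hI : 0 < R + (M + c) * (h + 1) := by
    have h1 : A11 * x₀ + A12 * v₀ - c
        < (2 * A11 - 1 / A11) * x₀ + 2 * A12 * v₀ + c / A11 := by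
      calc A11 * x₀ + A12 * v₀ - c ≤ Lls := hLls ▸ le_max_left _ _
        _ < Lus := hsafe
        _ ≤ _ := hLus ▸ min_le_right _ _
    rw [e1, e2, hA11] at h1
    have h2 : (M - c) * h < R + 2 * h * M + M + c := by
      rw [← lt_div_iff₀ hh0]
      have heq : (R + 2 * h * M + M + c) / h = (R + 2 * h * M + M) / h + c / h := by
        ring
      rw [heq]; linarith
    linarith [h2]
  have hII : R + (M - c) * (h + 1) < 0 := by
    have h1 : (2 * A11 - 1 / A11) * x₀ + 2 * A12 * v₀ - c / A11
        < A11 * x₀ + A12 * v₀ + c := by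
      calc (2 * A11 - 1 / A11) * x₀ + 2 * A12 * v₀ - c / A11 ≤ Lls :=
            hLls ▸ le_max_right _ _
        _ < Lus := hsafe
        _ ≤ _ := hLus ▸ min_le_left _ _
    rw [e1, e2, hA11] at h1
    have h2 : R + 2 * h * M + M - c < (M + c) * h := by
      rw [← div_lt_iff₀ hh0]
      have heq : (R + 2 * h * M + M - c) / h = (R + 2 * h * M + M) / h - c / h := by
        ring
      rw [heq]; linarith
    linarith [h2]
  rcases hRne.lt_or_gt with hRneg | hRpos
  · -- R < 0 : ΔL₁ < ΔL₂
    have hlt : ΔL₁ < ΔL₂ := by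
      rw [e3, e4]
      have : R / (h - 1) < R / (h + 1) := by
        rw [div_lt_div_iff₀ hhm hhp]; linarith
      linarith
    rw [min_eq_left hlt.le, max_eq_right hlt.le]
    apply ioo_inter _ _ _ _ hsafe (by linarith)
    · -- Lls < ΔL₂ + L'
      rw [hLls]
      apply max_lt
      · rw [e1, e4, hL']
        have hnum : (0:ℝ) < (R + (M + c) * (h + 1)) / (h + 1) := div_pos hI hhp
        have heq : (R + (M + c) * (h + 1)) / (h + 1) = R / (h + 1) + (M + c) := by
          field_simp
        rw [heq] at hnum; linarith
      · rw [e2, hA11, e4, hL']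
        have hnum : (0:ℝ) < (-(R + (M - c) * (h + 1))) / (h * (h + 1)) :=
          div_pos (by linarith) (mul_pos hh0 hhp)
        have heq : (-(R + (M - c) * (h + 1))) / (h * (h + 1))
            = P + R / (h + 1) + 2 * M - (P + (R + 2 * h * M + M) / h - c / h) := by
          field_simp; ring
        rw [heq] at hnum; linarith
    · -- ΔL₁ + L' < Lus
      rw [hLus]
      apply lt_min
      · rw [e1, e3, hL']
        have hnum : R + (M - c) * (h - 1) < 0 := by
          nlinarith [mul_neg_of_pos_of_neg hhm hII, mul_neg_of_pos_of_neg hh0 hRneg]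
        have hnum' : (R + (M - c) * (h - 1)) / (h - 1) < 0 :=
          div_neg_of_neg_of_pos hnum hhm
        have heq : (R + (M - c) * (h - 1)) / (h - 1) = R / (h - 1) + (M - c) := by
          field_simp
        rw [heq] at hnum'; linarith
      · rw [e2, hA11, e3, hL']
        have hnum : (0:ℝ) < ((M + c) * (h - 1) - R) / (h * (h - 1)) := by
          apply div_pos ?_ (mul_pos hh0 hhm)
          nlinarith [mul_pos hhm hI, mul_neg_of_pos_of_neg hh0 hRneg]
        have heq : ((M + c) * (h - 1) - R) / (h * (h - 1))
            = (P + (R + 2 * h * M + M) / h + c / h) - (P + R / (h - 1) + 2 * M) := by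
          field_simp; ring
        rw [heq] at hnum; linarith
  · -- 0 < R : ΔL₂ < ΔL₁
    have hlt : ΔL₂ < ΔL₁ := by
      rw [e3, e4]
      have : R / (h + 1) < R / (h - 1) := by
        rw [div_lt_div_iff₀ hhp hhm]; linarith
      linarith
    rw [min_eq_right hlt.le, max_eq_left hlt.le]
    apply ioo_inter _ _ _ _ hsafe (by linarith)
    · -- Lls < ΔL₁ + L'
      rw [hLls]
      apply max_lt
      · rw [e1, e3, hL']
        have hnum : (0:ℝ) < R + (M + c) * (h - 1) := by
          nlinarith [mul_pos hhm hI]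
        have hnum' : (0:ℝ) < (R + (M + c) * (h - 1)) / (h - 1) := div_pos hnum hhm
        have heq : (R + (M + c) * (h - 1)) / (h - 1) = R / (h - 1) + (M + c) := by
          field_simp
        rw [heq] at hnum'; linarith
      · rw [e2, hA11, e3, hL']
        have hnum : (0:ℝ) < (R + (c - M) * (h - 1)) / (h * (h - 1)) := by
          apply div_pos ?_ (mul_pos hh0 hhm)
          nlinarith [mul_neg_of_pos_of_neg hhm hII, mul_pos hh0 hRpos]
        have heq : (R + (c - M) * (h - 1)) / (h * (h - 1))
            = (P + R / (h - 1) + 2 * M) - (P + (R + 2 * h * M + M) / h - c / h) := by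
          field_simp; ring
        rw [heq] at hnum; linarith
    · -- ΔL₂ + L' < Lus
      rw [hLus]
      apply lt_min
      · rw [e1, e4, hL']
        have hnum : (R + (M - c) * (h + 1)) / (h + 1) < 0 :=
          div_neg_of_neg_of_pos hII hhp
        have heq : (R + (M - c) * (h + 1)) / (h + 1) = R / (h + 1) + (M - c) := by
          field_simp
        rw [heq] at hnum; linarith
      · rw [e2, hA11, e4, hL']
        have hnum : (0:ℝ) < (R + (M + c) * (h + 1)) / (h * (h + 1)) :=
          div_pos hI (mul_pos hh0 hhp)
        have heq : (R + (M + c) * (h + 1)) / (h * (h + 1))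
            = (P + (R + 2 * h * M + M) / h + c / h) - (P + R / (h + 1) + 2 * M) := by
          field_simp; ring
        rw [heq] at hnum; linarith
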